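/- arXiv:0812.4230 — 3 statements merged into one kernel-verified Lean document; each statement's English description precedes it below -/
import Mathlib

section
/- For every r with 0 ≤ r ≤ 2l and every symplectic-spinor-valued r-form φ, one has Hφ = 𝕚(r − l)φ; that is, the operator H = XY + YX acts on spinor-valued r-forms as 𝕚(r − l) times the identity. -/
noncomputable section

open Finset MvPolynomial

/-- The space of symplectic spinors: complex polynomials in `l` variables. -/
abbrev Pol (l : ℕ) := MvPolynomial (Fin l) ℂ

/-- Components `ω_{ij}` of the standard symplectic form on `ℝ^{2l}`. -/
def om (l : ℕ) (i j : Fin (2*l)) : ℝ :=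
  if (j : ℕ) = (i : ℕ) + l then 1 else if (i : ℕ) = (j : ℕ) + l then -1 else 0

/-- Components `ω^{ij}`, defined by `Σ_k ω_{ik} ω^{jk} = δ_i^j`. -/
def omUp (l : ℕ) (i j : Fin (2*l)) : ℝ :=
  if (j : ℕ) = (i : ℕ) + l then 1 else if (i : ℕ) = (j : ℕ) + l then -1 else 0

/-- Symplectic Clifford multiplication by a basis vector `e_i`. -/
def cliff (l : ℕ) (i : Fin (2*l)) (f : Pol l) : Pol l :=
  if h : (i : ℕ) < l then Complex.I • (MvPolynomial.X (⟨(i : ℕ), h⟩ : Fin l) * f)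
  else MvPolynomial.pderiv (⟨(i : ℕ) - l, by have := i.isLt; omega⟩ : Fin l) f

/-- Symplectic Clifford multiplication by an arbitrary vector, extended ℝ-bilinearly. -/
def cliffV (l : ℕ) (v : Fin (2*l) → ℝ) (f : Pol l) : Pol l :=
  ∑ i, ((v i : ℝ) : ℂ) • cliff l i f

/-- Symplectic-spinor-valued `r`-forms (as functions of their `r` vector arguments). -/
abbrev Form (l r : ℕ) := (Fin r → (Fin (2*l) → ℝ)) → Pol l

/-- The standard basis vector `e_i` of `ℝ^{2l}`. -/
def basisVec (l : ℕ) (i : Fin (2*l)) : Fin (2*l) → ℝ := Pi.single i 1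

/-- The operator `X`: `(Xφ)(v_1,…,v_{r+1}) = −Σ_a (−1)^{a+1} v_a · φ(v_1,…,v̂_a,…,v_{r+1})`. -/
def Xop (l r : ℕ) (φ : Form l r) : Form l (r+1) :=
  fun v => -∑ a : Fin (r+1), ((-1 : ℂ)^(a : ℕ)) • cliffV l (v a) (φ (fun b => v (a.succAbove b)))

/-- The operator `Y`: `(Yφ)(v_1,…,v_r) = Σ_{i,j} ω^{ij} e_j · φ(e_i, v_1,…,v_r)`. -/
def Yop (l r : ℕ) (φ : Form l (r+1)) : Form l r :=
  fun v => ∑ i, ∑ j, ((omUp l i j : ℝ) : ℂ) • cliff l j (φ (Fin.cons (basisVec l i) v))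

/-- The operator `H = XY + YX` (on 0-forms `Y` vanishes, so there `H = YX`). -/
def Hop (l : ℕ) : {r : ℕ} → Form l r → Form l r
  | 0, φ => Yop l 0 (Xop l 0 φ)
  | (r+1), φ => Xop l r (Yop l r φ) + Yop l (r+1) (Xop l (r+1) φ)

/-- `X²Y²` on spinor-valued 2-forms. -/
def XXYY (l : ℕ) (φ : Form l 2) : Form l 2 := Xop l 1 (Xop l 0 (Yop l 0 (Yop l 1 φ)))

/-- `XY` on spinor-valued 2-forms. -/
def XY2 (l : ℕ) (φ : Form l 2) : Form l 2 := Xop l 1 (Yop l 1 φ)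

/-- The projection `q^{20} = (1/l) X²Y²`. -/
def q20 (l : ℕ) (φ : Form l 2) : Form l 2 := ((l : ℂ))⁻¹ • XXYY l φ

/-- The projection `q^{21} = (𝕚/(1−l)) (XY − (𝕚/l) X²Y²)`. -/
def q21 (l : ℕ) (φ : Form l 2) : Form l 2 :=
  (Complex.I / (1 - (l : ℂ))) • (XY2 l φ - (Complex.I / (l : ℂ)) • XXYY l φ)

/-- The projection `q^{22} = Id − q^{20} − q^{21}`. -/
def q22 (l : ℕ) (φ : Form l 2) : Form l 2 := φ - q20 l φ - q21 l φ

/-- The spinor-valued 2-form `c · ε^k ∧ ε^m ⊗ s`. -/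
def w2 (l : ℕ) (c : ℝ) (k m : Fin (2*l)) (s : Pol l) : Form l 2 :=
  fun v => ((c * (v 0 k * v 1 m - v 0 m * v 1 k) : ℝ) : ℂ) • s

/-- The symplectic Ricci tensor `σ_{ij} = Σ_{k,m} ω^{km} R_{mjki}`. -/
def ric (l : ℕ) (R : Fin (2*l) → Fin (2*l) → Fin (2*l) → Fin (2*l) → ℝ)
    (i j : Fin (2*l)) : ℝ :=
  ∑ k, ∑ m, omUp l k m * R m j k i

/-- `σ̃_{ijkl}` built from a symmetric tensor `σ`. -/
def st (l : ℕ) (σ : Fin (2*l) → Fin (2*l) → ℝ) (i j k m : Fin (2*l)) : ℝ :=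
  (1/(2*((l : ℝ)+1))) * (om l i m * σ j k - om l i k * σ j m
    + om l j m * σ i k - om l j k * σ i m + 2 * σ i j * om l k m)

/-- The symplectic Weyl tensor `W = R − σ̃`. -/
def weyl (l : ℕ) (R : Fin (2*l) → Fin (2*l) → Fin (2*l) → Fin (2*l) → ℝ)
    (i j k m : Fin (2*l)) : ℝ :=
  R i j k m - st l (ric l R) i j k m

/-- Raising all four indices: `T^{ijkm} = Σ ω^{ia}ω^{jb}ω^{kc}ω^{md} T_{abcd}`. -/
def upT (l : ℕ) (T : Fin (2*l) → Fin (2*l) → Fin (2*l) → Fin (2*l) → ℝ)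
    (i j k m : Fin (2*l)) : ℝ :=
  ∑ a, ∑ b, ∑ c, ∑ d, omUp l i a * omUp l j b * omUp l k c * omUp l m d * T a b c d

/-- Raising both indices of a 2-tensor: `σ^{ij} = Σ ω^{ia}ω^{jb} σ_{ab}`. -/
def up2 (l : ℕ) (σ : Fin (2*l) → Fin (2*l) → ℝ) (i j : Fin (2*l)) : ℝ :=
  ∑ a, ∑ b, omUp l i a * omUp l j b * σ a b

/-- The spinor-valued 2-form `(𝕚/2) Σ T^{ij}_{kl} ε^k ∧ ε^l ⊗ e_{ij}·φ` built from a
4-tensor `T` (used for `R^S φ`, `σ^S φ` and `W^S φ`). -/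
def curvS (l : ℕ) (T : Fin (2*l) → Fin (2*l) → Fin (2*l) → Fin (2*l) → ℝ)
    (φ : Pol l) : Form l 2 :=
  (Complex.I/2) • ∑ i, ∑ j, ∑ k, ∑ m,
    w2 l (∑ a, ∑ b, omUp l i a * omUp l j b * T a b k m) k m (cliff l i (cliff l j φ))

/-- The spinor-valued 2-form `Σ_{i,j,k,d,m} T^{ijk}_d ε^m ∧ ε^d ⊗ e_{mkij}·φ`. -/
def mixS (l : ℕ) (T : Fin (2*l) → Fin (2*l) → Fin (2*l) → Fin (2*l) → ℝ)
    (φ : Pol l) : Form l 2 :=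
  ∑ i, ∑ j, ∑ k, ∑ d, ∑ m,
    w2 l (∑ a, ∑ b, ∑ c, omUp l i a * omUp l j b * omUp l k c * T a b c d) m d
      (cliff l m (cliff l k (cliff l i (cliff l j φ))))



/-! ### Auxiliary lemmas -/

section Aux

lemma pderiv_comm' {σ : Type*} [DecidableEq σ] (i j : σ) (f : MvPolynomial σ ℂ) :
    pderiv i (pderiv j f) = pderiv j (pderiv i f) := by
  have hder : ∀ (c : Prop) [Decidable c] (a : σ),
      pderiv a (if c then (1:MvPolynomial σ ℂ) else 0) = 0 := by
    intro c _ a; split <;> simp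
  induction f using MvPolynomial.induction_on with
  | C a => simp
  | add p q hp hq => simp [hp, hq]
  | mul_X p n ih =>
    simp only [pderiv_mul, map_add, ih, pderiv_X, Pi.single_apply, hder]
    by_cases h1 : j = n <;> by_cases h2 : i = n <;> simp [h1, h2] <;> ring

lemma pderiv_X_mul' {l : ℕ} (d a : Fin l) (f : Pol l) :
    pderiv d (X a * f) = X a * pderiv d f + (if d = a then f else 0) := by
  rw [pderiv_mul]
  by_cases h : d = a
  · subst h; simp [pderiv_X_self, add_comm]
  · simp [pderiv_X_of_ne (Ne.symm h), h]

lemma cliff_comm (l : ℕ) (j k : Fin (2*l)) (f : Pol l) :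
    cliff l j (cliff l k f) - cliff l k (cliff l j f)
      = (-(Complex.I * ((om l j k : ℝ) : ℂ))) • f := by
  unfold cliff om
  rcases lt_or_ge (j : ℕ) l with hj | hj <;> rcases lt_or_ge (k : ℕ) l with hk | hk
  · simp only [dif_pos hj, dif_pos hk,
      if_neg (show ¬((k:ℕ) = (j:ℕ) + l) by omega),
      if_neg (show ¬((j:ℕ) = (k:ℕ) + l) by omega)]
    rw [mul_smul_comm, mul_smul_comm, mul_left_comm]
    simp
  · simp only [dif_pos hj, dif_neg (show ¬((k:ℕ) < l) by omega),
      if_neg (show ¬((j:ℕ) = (k:ℕ) + l) by omega), (pderiv _).map_smul, pderiv_X_mul']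
    have hd : ((⟨(k:ℕ) - l, by have := k.isLt; omega⟩ : Fin l) = ⟨(j:ℕ), hj⟩)
        ↔ ((k:ℕ) = (j:ℕ) + l) := by
      rw [Fin.mk.injEq]; omega
    by_cases h : (k:ℕ) = (j:ℕ) + l
    · rw [if_pos h, if_pos (hd.2 h)]
      push_cast
      simp only [smul_add]
      module
    · rw [if_neg h, if_neg (fun hh => h (hd.1 hh))]
      simp
  · simp only [dif_pos hk, dif_neg (show ¬((j:ℕ) < l) by omega),
      if_neg (show ¬((k:ℕ) = (j:ℕ) + l) by omega), (pderiv _).map_smul, pderiv_X_mul']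
    have hd : ((⟨(j:ℕ) - l, by have := j.isLt; omega⟩ : Fin l) = ⟨(k:ℕ), hk⟩)
        ↔ ((j:ℕ) = (k:ℕ) + l) := by
      rw [Fin.mk.injEq]; omega
    by_cases h : (j:ℕ) = (k:ℕ) + l
    · rw [if_pos h, if_pos (hd.2 h)]
      push_cast
      simp only [smul_add]
      module
    · rw [if_neg h, if_neg (fun hh => h (hd.1 hh))]
      simp
  · simp only [dif_neg (show ¬((j:ℕ) < l) by omega), dif_neg (show ¬((k:ℕ) < l) by omega),
      if_neg (show ¬((k:ℕ) = (j:ℕ) + l) by have := k.isLt; omega),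
      if_neg (show ¬((j:ℕ) = (k:ℕ) + l) by have := j.isLt; omega)]
    rw [pderiv_comm', sub_self]
    norm_num

lemma om_antisymm (l : ℕ) (i j : Fin (2*l)) : om l i j = - om l j i := by
  have := i.isLt; have := j.isLt
  unfold om
  split_ifs <;> (first | omega | norm_num)

lemma omUp_om (l : ℕ) (i k : Fin (2*l)) :
    ∑ j, omUp l i j * om l j k = -(if i = k then (1:ℝ) else 0) := by
  have hk := k.isLt; have hi2 := i.isLt
  rcases lt_or_ge (i:ℕ) l with hi | hi
  · rw [Finset.sum_eq_single (⟨(i:ℕ)+l, by omega⟩ : Fin (2*l))]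
    · unfold omUp om
      rw [if_pos (show (i:ℕ)+l = (i:ℕ)+l from rfl),
        if_neg (show ¬((k:ℕ) = (i:ℕ)+l+l) by omega)]
      simp only [Fin.ext_iff]
      split_ifs <;> (first | omega | norm_num)
    · intro b _ hb
      have hb' : (b:ℕ) ≠ (i:ℕ) + l := fun h => hb (Fin.ext (by simpa using h))
      unfold omUp om
      rw [if_neg hb', if_neg (by omega)]
      ring
    · simp
  · rw [Finset.sum_eq_single (⟨(i:ℕ)-l, by omega⟩ : Fin (2*l))]
    · unfold omUp om
      rw [if_neg (show ¬((i:ℕ)-l = (i:ℕ)+l) by omega),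
        if_pos (show (i:ℕ) = (i:ℕ)-l+l by omega),
        if_neg (show ¬((i:ℕ)-l = (k:ℕ)+l) by omega)]
      simp only [Fin.ext_iff]
      split_ifs <;> (first | omega | norm_num)
    · intro b _ hb
      have hb3 := b.isLt
      have hb' : (i:ℕ) ≠ (b:ℕ) + l := by
        intro h; exact hb (Fin.ext (by simp; omega))
      unfold omUp om
      rw [if_neg (show ¬((b:ℕ) = (i:ℕ)+l) by omega), if_neg hb']
      ring
    · simp

lemma cliff_add (l : ℕ) (i : Fin (2*l)) (f g : Pol l) :
    cliff l i (f + g) = cliff l i f + cliff l i g := by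
  unfold cliff; split
  · rw [mul_add, smul_add]
  · exact map_add _ _ _

lemma cliff_smul (l : ℕ) (i : Fin (2*l)) (c : ℂ) (f : Pol l) :
    cliff l i (c • f) = c • cliff l i f := by
  unfold cliff; split
  · rw [mul_smul_comm, smul_comm]
  · exact (pderiv _).map_smul c f

lemma cliff_zero (l : ℕ) (i : Fin (2*l)) : cliff l i 0 = 0 := by
  have := cliff_smul l i 0 0; simpa using this

lemma cliff_neg (l : ℕ) (i : Fin (2*l)) (f : Pol l) : cliff l i (-f) = -cliff l i f := by
  have := cliff_smul l i (-1) f; simpa using this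

lemma cliff_sum (l : ℕ) (i : Fin (2*l)) {α : Type*} (s : Finset α) (f : α → Pol l) :
    cliff l i (∑ a ∈ s, f a) = ∑ a ∈ s, cliff l i (f a) := by
  classical
  induction s using Finset.induction_on with
  | empty => simp [cliff_zero]
  | insert _ _ h ih => rw [Finset.sum_insert h, Finset.sum_insert h, cliff_add, ih]

lemma cliffV_basis (l : ℕ) (i : Fin (2*l)) (f : Pol l) :
    cliffV l (basisVec l i) f = cliff l i f := by
  unfold cliffV basisVec
  rw [Finset.sum_eq_single i]
  · simp
  · intro b _ hb
    rw [Pi.single_eq_of_ne hb]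
    simp
  · simp

lemma cross_sum (l : ℕ) (i k : Fin (2*l)) (g : Pol l) :
    ∑ j, ((omUp l i j : ℝ) : ℂ) • (cliff l j (cliff l k g) - cliff l k (cliff l j g))
      = (if i = k then Complex.I else 0) • g := by
  simp only [cliff_comm, smul_smul]
  rw [← Finset.sum_smul]
  congr 1
  have h1 : ∀ j, ((omUp l i j : ℝ) : ℂ) * (-(Complex.I * ((om l j k : ℝ) : ℂ)))
      = (-Complex.I) * ((omUp l i j * om l j k : ℝ) : ℂ) := by
    intro j; push_cast; ring
  rw [Finset.sum_congr rfl (fun j _ => h1 j), ← Finset.mul_sum]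
  rw [show (∑ j, ((omUp l i j * om l j k : ℝ) : ℂ)) = (((∑ j, omUp l i j * om l j k : ℝ)) : ℂ)
    from by push_cast; ring]
  rw [omUp_om]
  split_ifs <;> simp

lemma diag_sum (l : ℕ) (f : Pol l) :
    ∑ i, ∑ j, ((omUp l i j : ℝ) : ℂ) • cliff l j (cliff l i f)
      = (Complex.I * (l : ℂ)) • f := by
  set S := ∑ i, ∑ j, ((omUp l i j : ℝ) : ℂ) • cliff l j (cliff l i f) with hS
  have hswap : S = ∑ i, ∑ j, ((omUp l j i : ℝ) : ℂ) • cliff l i (cliff l j f) :=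
    Finset.sum_comm
  have h2 : (2:ℂ) • S = (2:ℂ) • ((Complex.I * (l : ℂ)) • f) := by
    have h2s : (2:ℂ) • S = S + S := by rw [two_smul]
    rw [h2s]
    nth_rewrite 2 [hswap]
    rw [hS, ← Finset.sum_add_distrib]
    have hmerge : ∀ i ∈ Finset.univ, (∑ j, ((omUp l i j : ℝ) : ℂ) • cliff l j (cliff l i f))
        + (∑ j, ((omUp l j i : ℝ) : ℂ) • cliff l i (cliff l j f))
        = ∑ j, ((omUp l i j : ℝ) : ℂ) • (cliff l j (cliff l i f) - cliff l i (cliff l j f)) := by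
      intro i _
      rw [← Finset.sum_add_distrib]
      refine Finset.sum_congr rfl (fun j _ => ?_)
      have h3 : omUp l j i = - omUp l i j := om_antisymm l j i
      rw [h3, smul_sub]
      push_cast
      module
    rw [Finset.sum_congr rfl hmerge]
    have hcc : ∀ i : Fin (2*l), ∀ j ∈ Finset.univ (α := Fin (2*l)),
        ((omUp l i j : ℝ) : ℂ) • (cliff l j (cliff l i f) - cliff l i (cliff l j f))
        = ((omUp l i j * omUp l i j : ℝ) : ℂ) • (Complex.I • f) := by
      intro i j _
      rw [cliff_comm]
      have h4 : om l j i = - omUp l i j := by rw [om_antisymm]; rfl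
      rw [h4, smul_smul, smul_smul]
      push_cast
      ring_nf
    have hinner : ∀ i ∈ Finset.univ (α := Fin (2*l)),
        ∑ j, ((omUp l i j : ℝ) : ℂ) • (cliff l j (cliff l i f) - cliff l i (cliff l j f))
        = Complex.I • f := by
      intro i _
      rw [Finset.sum_congr rfl (hcc i), ← Finset.sum_smul]
      have hr : (∑ j, ((omUp l i j * omUp l i j : ℝ) : ℂ))
          = (((∑ j, omUp l i j * omUp l i j : ℝ)) : ℂ) := by push_cast; ring
      have hone : (∑ j, omUp l i j * omUp l i j) = (1:ℝ) := by
        have h := omUp_om l i i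
        simp only [if_pos rfl, if_true] at h
        have h5 : ∀ j, omUp l i j * om l j i = -(omUp l i j * omUp l i j) := by
          intro j
          rw [om_antisymm l j i]
          show omUp l i j * -(omUp l i j) = _
          ring
        rw [Finset.sum_congr rfl (fun j _ => h5 j), Finset.sum_neg_distrib] at h
        linarith
      rw [hr, hone]
      simp
    rw [Finset.sum_congr rfl hinner, Finset.sum_const, Finset.card_univ, Fintype.card_fin,
      ← Nat.cast_smul_eq_nsmul ℂ, smul_smul, smul_smul]
    congr 1
    push_cast
    ring
  exact smul_right_injective (Pol l) (two_ne_zero (α := ℂ)) h2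

lemma real_smul_pol (l : ℕ) (c : ℝ) (p : Pol l) : ((c : ℝ) : ℂ) • p = c • p := by
  rw [show ((c : ℝ) : ℂ) = algebraMap ℝ ℂ c from rfl, algebraMap_smul]

lemma alt_expand {l m : ℕ} (φ : AlternatingMap ℝ (Fin (2*l) → ℝ) (Pol l) (Fin (m+1)))
    (u : Fin m → (Fin (2*l) → ℝ)) (x : Fin (2*l) → ℝ) :
    ∑ k, ((x k : ℝ) : ℂ) • φ (Fin.cons (basisVec l k) u) = φ (Fin.cons x u) := by
  simp only [real_smul_pol]
  let L : (Fin (2*l) → ℝ) →ₗ[ℝ] Pol l :=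
    { toFun := fun y => φ (Fin.cons y u)
      map_add' := by
        intro y z
        have := φ.toMultilinearMap.map_update_add (Fin.cons 0 u) 0 y z
        simpa [Fin.update_cons_zero] using this
      map_smul' := by
        intro c y
        have := φ.toMultilinearMap.map_update_smul (Fin.cons 0 u) 0 c y
        simpa [Fin.update_cons_zero] using this }
  have hx : ∑ k, x k • basisVec l k = x := by
    funext j
    simp only [Finset.sum_apply, Pi.smul_apply, basisVec, Pi.single_apply, smul_eq_mul,
      mul_ite, mul_one, mul_zero]
    simp
  rw [show φ (Fin.cons x u) = L x from rfl]
  conv_rhs => rw [← hx]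
  rw [map_sum]
  refine Finset.sum_congr rfl fun k _ => ?_
  rw [map_smul]
  rfl

lemma alt_sign {l m : ℕ} (φ : AlternatingMap ℝ (Fin (2*l) → ℝ) (Pol l) (Fin (m+1)))
    (v : Fin (m+1) → (Fin (2*l) → ℝ)) (a : Fin (m+1)) :
    φ (Fin.cons (v a) (fun b => v (a.succAbove b)))
      = ((-1:ℂ)^(a:ℕ)) • φ v := by
  have hc : (Fin.cons (v a) (fun b => v (a.succAbove b)) : Fin (m+1) → (Fin (2*l) → ℝ))
      = v ∘ a.cycleRange.symm := by
    funext b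
    cases b using Fin.cases with
    | zero => simp [Fin.cycleRange_symm_zero]
    | succ c => simp [Fin.cycleRange_symm_succ]
  rw [hc, φ.map_perm v a.cycleRange.symm]
  have hs : Equiv.Perm.sign a.cycleRange.symm = (-1)^(a:ℕ) := by
    rw [show a.cycleRange.symm = a.cycleRange⁻¹ from rfl, map_inv, Fin.sign_cycleRange]
    simp [inv_pow]
  rw [hs]
  rcases Nat.even_or_odd (a:ℕ) with h | h
  · simp [h.neg_one_pow]
  · simp [h.neg_one_pow, Units.smul_def]

end Aux

/-- On alternating spinor-valued `r`-forms (`0 ≤ r ≤ 2l`),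
`H = XY + YX` acts as `𝕚 (r − l) · Id`. -/
theorem stmt_1 (l r : ℕ) (hl : 2 ≤ l) (hr : r ≤ 2*l)
    (φ : AlternatingMap ℝ (Fin (2*l) → ℝ) (Pol l) (Fin r)) :
    Hop l (fun v => φ v) = fun v => (Complex.I * ((r : ℂ) - (l : ℂ))) • φ v := by
  cases r with
  | zero =>
    funext v
    show Yop l 0 (Xop l 0 (fun w => φ w)) v = _
    have harg : ∀ i : Fin (2*l),
        (fun b => (Fin.cons (basisVec l i) v : Fin 1 → (Fin (2*l) → ℝ))
          ((0 : Fin 1).succAbove b)) = v :=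
      fun i => Subsingleton.elim _ _
    have harg2 : ∀ w : Fin 0 → (Fin (2*l) → ℝ), φ w = φ v :=
      fun w => congrArg φ (Subsingleton.elim w v)
    simp only [Yop, Xop, Fin.sum_univ_succ, Fin.sum_univ_zero, add_zero, Fin.cons_zero,
      Fin.val_zero, pow_zero, one_smul, harg2, cliffV_basis, cliff_neg, smul_neg,
      Finset.sum_neg_distrib]
    rw [diag_sum, ← neg_smul]
    congr 1
    push_cast
    ring
  | succ m =>
    funext v
    show Xop l m (Yop l m (fun w => φ w)) v
        + Yop l (m+1) (Xop l (m+1) (fun w => φ w)) v = _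
    have hA : Xop l m (Yop l m (fun w => φ w)) v =
        -∑ a : Fin (m+1), ∑ k, ∑ i, ∑ j,
          (((-1:ℂ)^(a:ℕ)) * ((v a k :ℝ):ℂ) * ((omUp l i j:ℝ):ℂ)) •
            cliff l k (cliff l j (φ (Fin.cons (basisVec l i) (fun b => v (a.succAbove b))))) := by
      simp only [Xop, Yop, cliffV, cliff_sum, cliff_smul, Finset.smul_sum, smul_smul, mul_assoc]
    have h0 : ∀ (u : Fin (2*l) → ℝ),
        (fun b => (Fin.cons u v : Fin (m+2) → (Fin (2*l) → ℝ)) ((0 : Fin (m+2)).succAbove b))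
          = v := by
      intro u; funext b; rw [Fin.zero_succAbove, Fin.cons_succ]
    have hsucc : ∀ (u : Fin (2*l) → ℝ) (b : Fin (m+1)),
        (fun c => (Fin.cons u v : Fin (m+2) → (Fin (2*l) → ℝ)) ((Fin.succ b).succAbove c))
          = Fin.cons u (fun c => v (b.succAbove c)) := by
      intro u b; funext c
      cases c using Fin.cases with
      | zero => rw [Fin.succ_succAbove_zero, Fin.cons_zero, Fin.cons_zero]
      | succ d => rw [Fin.succ_succAbove_succ, Fin.cons_succ, Fin.cons_succ]
    have hX : ∀ u : Fin (2*l) → ℝ,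
        Xop l (m+1) (fun w => φ w) (Fin.cons u v)
          = -cliffV l u (φ v) + ∑ b : Fin (m+1), ((-1:ℂ)^(b:ℕ)) •
              cliffV l (v b) (φ (Fin.cons u (fun c => v (b.succAbove c)))) := by
      intro u
      show -∑ a : Fin (m+2), _ = _
      rw [Fin.sum_univ_succ, neg_add]
      simp only [Fin.cons_zero, Fin.cons_succ, h0, hsucc, Fin.val_zero, pow_zero, one_smul,
        Fin.val_succ, pow_succ, mul_neg_one, neg_smul, Finset.sum_neg_distrib, neg_neg]
    have hB : Yop l (m+1) (Xop l (m+1) (fun w => φ w)) v =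
        -(∑ i, ∑ j, ((omUp l i j:ℝ):ℂ) • cliff l j (cliff l i (φ v)))
        + ∑ i, ∑ j, ∑ b : Fin (m+1), ∑ k,
            (((omUp l i j:ℝ):ℂ) * (((-1:ℂ)^(b:ℕ)) * ((v b k :ℝ):ℂ))) •
              cliff l j (cliff l k (φ (Fin.cons (basisVec l i) (fun c => v (b.succAbove c))))) := by
      simp only [Yop, hX, cliffV_basis, cliff_add, cliff_neg, cliff_sum, cliff_smul,
        Finset.smul_sum, smul_add, smul_neg, smul_smul, Finset.sum_add_distrib,
        Finset.sum_neg_distrib, mul_assoc]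
      simp only [cliffV, cliff_sum, cliff_smul, Finset.smul_sum, smul_smul, mul_assoc]
    have hA2 : (∑ a : Fin (m+1), ∑ k, ∑ i, ∑ j,
          (((-1:ℂ)^(a:ℕ)) * ((v a k :ℝ):ℂ) * ((omUp l i j:ℝ):ℂ)) •
            cliff l k (cliff l j (φ (Fin.cons (basisVec l i) (fun b => v (a.succAbove b))))))
        = ∑ a : Fin (m+1), ∑ i, ∑ k, ∑ j,
          (((-1:ℂ)^(a:ℕ)) * ((v a k :ℝ):ℂ) * ((omUp l i j:ℝ):ℂ)) •
            cliff l k (cliff l j (φ (Fin.cons (basisVec l i) (fun b => v (a.succAbove b))))) :=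
      Finset.sum_congr rfl fun a _ => Finset.sum_comm
    have hB2 : (∑ i, ∑ j, ∑ b : Fin (m+1), ∑ k,
          (((omUp l i j:ℝ):ℂ) * (((-1:ℂ)^(b:ℕ)) * ((v b k :ℝ):ℂ))) •
            cliff l j (cliff l k (φ (Fin.cons (basisVec l i) (fun c => v (b.succAbove c))))))
        = ∑ b : Fin (m+1), ∑ i, ∑ k, ∑ j,
          (((omUp l i j:ℝ):ℂ) * (((-1:ℂ)^(b:ℕ)) * ((v b k :ℝ):ℂ))) •
            cliff l j (cliff l k (φ (Fin.cons (basisVec l i) (fun c => v (b.succAbove c))))) := by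
      calc (∑ i, ∑ j, ∑ b : Fin (m+1), ∑ k,
          (((omUp l i j:ℝ):ℂ) * (((-1:ℂ)^(b:ℕ)) * ((v b k :ℝ):ℂ))) •
            cliff l j (cliff l k (φ (Fin.cons (basisVec l i) (fun c => v (b.succAbove c))))))
          = ∑ i, ∑ b : Fin (m+1), ∑ j, ∑ k,
            (((omUp l i j:ℝ):ℂ) * (((-1:ℂ)^(b:ℕ)) * ((v b k :ℝ):ℂ))) •
              cliff l j (cliff l k (φ (Fin.cons (basisVec l i) (fun c => v (b.succAbove c))))) :=
            Finset.sum_congr rfl fun i _ => Finset.sum_comm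
        _ = ∑ b : Fin (m+1), ∑ i, ∑ j, ∑ k,
            (((omUp l i j:ℝ):ℂ) * (((-1:ℂ)^(b:ℕ)) * ((v b k :ℝ):ℂ))) •
              cliff l j (cliff l k (φ (Fin.cons (basisVec l i) (fun c => v (b.succAbove c))))) :=
            Finset.sum_comm
        _ = ∑ b : Fin (m+1), ∑ i, ∑ k, ∑ j,
            (((omUp l i j:ℝ):ℂ) * (((-1:ℂ)^(b:ℕ)) * ((v b k :ℝ):ℂ))) •
              cliff l j (cliff l k (φ (Fin.cons (basisVec l i) (fun c => v (b.succAbove c))))) :=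
            Finset.sum_congr rfl fun b _ => Finset.sum_congr rfl fun i _ => Finset.sum_comm
    have hkey : ∀ a ∈ (Finset.univ : Finset (Fin (m+1))),
        ((∑ i, ∑ k, ∑ j,
          (((omUp l i j:ℝ):ℂ) * (((-1:ℂ)^(a:ℕ)) * ((v a k :ℝ):ℂ))) •
            cliff l j (cliff l k (φ (Fin.cons (basisVec l i) (fun c => v (a.succAbove c))))))
        - (∑ i, ∑ k, ∑ j,
          (((-1:ℂ)^(a:ℕ)) * ((v a k :ℝ):ℂ) * ((omUp l i j:ℝ):ℂ)) •
            cliff l k (cliff l j (φ (Fin.cons (basisVec l i) (fun b => v (a.succAbove b)))))))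
        = Complex.I • φ v := by
      intro a _
      rw [← Finset.sum_sub_distrib]
      have step1 : ∀ i ∈ (Finset.univ : Finset (Fin (2*l))),
          ((∑ k, ∑ j,
            (((omUp l i j:ℝ):ℂ) * (((-1:ℂ)^(a:ℕ)) * ((v a k :ℝ):ℂ))) •
              cliff l j (cliff l k (φ (Fin.cons (basisVec l i) (fun c => v (a.succAbove c))))))
          - (∑ k, ∑ j,
            (((-1:ℂ)^(a:ℕ)) * ((v a k :ℝ):ℂ) * ((omUp l i j:ℝ):ℂ)) •
              cliff l k (cliff l j (φ (Fin.cons (basisVec l i) (fun b => v (a.succAbove b)))))))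
          = ∑ k, (((-1:ℂ)^(a:ℕ)) * ((v a k :ℝ):ℂ)) • ((if i = k then Complex.I else 0) •
              φ (Fin.cons (basisVec l i) (fun c => v (a.succAbove c)))) := by
        intro i _
        rw [← Finset.sum_sub_distrib]
        refine Finset.sum_congr rfl fun k _ => ?_
        rw [← Finset.sum_sub_distrib]
        have hj : ∀ j ∈ (Finset.univ : Finset (Fin (2*l))),
            ((((omUp l i j:ℝ):ℂ) * (((-1:ℂ)^(a:ℕ)) * ((v a k :ℝ):ℂ))) •
              cliff l j (cliff l k (φ (Fin.cons (basisVec l i) (fun c => v (a.succAbove c)))))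
            - (((-1:ℂ)^(a:ℕ)) * ((v a k :ℝ):ℂ) * ((omUp l i j:ℝ):ℂ)) •
              cliff l k (cliff l j (φ (Fin.cons (basisVec l i) (fun b => v (a.succAbove b))))))
            = (((-1:ℂ)^(a:ℕ)) * ((v a k :ℝ):ℂ)) • (((omUp l i j:ℝ):ℂ) •
                (cliff l j (cliff l k (φ (Fin.cons (basisVec l i) (fun c => v (a.succAbove c)))))
                - cliff l k (cliff l j (φ (Fin.cons (basisVec l i) (fun c => v (a.succAbove c))))))) := by
          intro j _
          simp only [smul_sub, smul_smul]
          congr 1 <;> congr 1 <;> ring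
        rw [Finset.sum_congr rfl hj, ← Finset.smul_sum, cross_sum]
      rw [Finset.sum_congr rfl step1]
      have step2 : ∀ i ∈ (Finset.univ : Finset (Fin (2*l))),
          (∑ k, (((-1:ℂ)^(a:ℕ)) * ((v a k :ℝ):ℂ)) • ((if i = k then Complex.I else 0) •
              φ (Fin.cons (basisVec l i) (fun c => v (a.succAbove c)))))
          = (((-1:ℂ)^(a:ℕ)) * Complex.I) • (((v a i :ℝ):ℂ) •
              φ (Fin.cons (basisVec l i) (fun c => v (a.succAbove c)))) := by
        intro i _
        rw [Finset.sum_eq_single i]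
        · rw [if_pos rfl, smul_smul, smul_smul]
          congr 1
          ring
        · intro k _ hk
          rw [if_neg (fun h => hk h.symm)]
          simp
        · simp
      rw [Finset.sum_congr rfl step2, ← Finset.smul_sum, alt_expand φ _ (v a),
        alt_sign φ v a, smul_smul]
      rw [show ((-1:ℂ)^(a:ℕ) * Complex.I) * (-1:ℂ)^(a:ℕ) = Complex.I from by
        rw [mul_comm, ← mul_assoc, ← pow_add, Even.neg_one_pow ⟨(a:ℕ), rfl⟩, one_mul]]
    rw [hA, hB, hA2, hB2, diag_sum]
    rw [show ∀ (P Q D : Pol l), -P + (-D + Q) = (Q - P) - D from fun P Q D => by abel]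
    rw [← Finset.sum_sub_distrib, Finset.sum_congr rfl hkey, Finset.sum_const,
      Finset.card_univ, Fintype.card_fin, ← Nat.cast_smul_eq_nsmul ℂ, smul_smul, ← sub_smul]
    congr 1
    push_cast
    ring

end
end

section
/- The symplectic Weyl curvature tensor is totally trace-free: with W^{ijkl} := Σ_{a,b,c,d} ω^{ia}ω^{jb}ω^{kc}ω^{ld} W_{abcd}, all six contractions vanish, i.e. Σ_{i,j} W^{ijkl}ω_{ij} = 0, Σ_{i,k} W^{ijkl}ω_{ik} = 0, Σ_{i,l} W^{ijkl}ω_{il} = 0, Σ_{j,k} W^{ijkl}ω_{jk} = 0, Σ_{j,l} W^{ijkl}ω_{jl} = 0 and Σ_{k,l} W^{ijkl}ω_{kl} = 0 (the free indices being arbitrary). -/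
noncomputable section

open Finset MvPolynomial

namespace S5
set_option linter.unusedSectionVars false
set_option linter.unusedVariables false


variable (l : ℕ)

def pa (i : Fin (2*l)) : Fin (2*l) :=
  if h : (i : ℕ) < l then ⟨(i : ℕ) + l, by omega⟩
  else ⟨(i : ℕ) - l, by have := i.isLt; omega⟩

def sg (i : Fin (2*l)) : ℝ := if (i : ℕ) < l then 1 else -1

lemma pa_val (i : Fin (2*l)) :
    ((pa l i : Fin (2*l)) : ℕ) = if (i : ℕ) < l then (i : ℕ) + l else (i : ℕ) - l := by
  unfold pa; split <;> simp_all

lemma pa_pa (i : Fin (2*l)) : pa l (pa l i) = i := by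
  have hi := i.isLt
  apply Fin.ext
  rw [pa_val, pa_val]
  split_ifs <;> omega

lemma sg_pa (i : Fin (2*l)) : sg l (pa l i) = - sg l i := by
  have hi := i.isLt
  unfold sg
  rw [pa_val]
  split_ifs <;> (try norm_num) <;> omega

lemma sg_sq (i : Fin (2*l)) : sg l i * sg l i = 1 := by
  unfold sg; split <;> norm_num

lemma pa_inj : Function.Injective (pa l) := by
  intro a b h
  have := congrArg (pa l) h
  rwa [pa_pa, pa_pa] at this

lemma eq_pa_iff (i j : Fin (2*l)) : j = pa l i ↔ i = pa l j := by
  constructor <;> intro h <;> subst h <;> rw [pa_pa]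

lemma om_eq (i j : Fin (2*l)) : om l i j = if j = pa l i then sg l i else 0 := by
  have hi := i.isLt; have hj := j.isLt
  by_cases h : j = pa l i
  · rw [if_pos h]
    subst h
    have hv := pa_val l i
    unfold om sg
    split_ifs at hv ⊢ <;> (try rfl) <;> omega
  · rw [if_neg h]
    have hv := pa_val l i
    unfold om
    split_ifs with h1 h2 <;> (try rfl) <;>
      (exfalso; apply h; apply Fin.ext; split_ifs at hv <;> omega)

lemma sum_pa (f : Fin (2*l) → ℝ) : ∑ i, f (pa l i) = ∑ i, f i := by
  apply Fintype.sum_bijective (pa l) ⟨pa_inj l, fun b => ⟨pa l b, pa_pa l b⟩⟩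
  intro x; rfl

lemma sum_sg_sq : ∑ i : Fin (2*l), sg l i * sg l i = 2 * l := by
  simp [sg_sq]


variable (l : ℕ)

lemma om_pa_self (a : Fin (2*l)) : om l a (pa l a) = sg l a := by
  rw [om_eq, if_pos rfl]

lemma om_pa_self' (a : Fin (2*l)) : om l (pa l a) a = -(sg l a) := by
  rw [om_eq, pa_pa, if_pos rfl, sg_pa]

lemma om_left (a x : Fin (2*l)) : om l a x = if a = pa l x then -(sg l x) else 0 := by
  rw [om_eq]
  by_cases h : a = pa l x
  · subst h; rw [pa_pa, if_pos rfl, if_pos rfl, sg_pa]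
  · rw [if_neg h, if_neg (fun hc => h ((eq_pa_iff l a x).mp hc))]

lemma om_paleft (a x : Fin (2*l)) : om l (pa l a) x = if a = x then -(sg l x) else 0 := by
  rw [om_eq]
  by_cases h : a = x
  · subst h; rw [pa_pa, if_pos rfl, if_pos rfl, sg_pa]
  · rw [if_neg h, if_neg (by rw [pa_pa]; exact fun hc => h hc.symm)]

lemma om_paright (a x : Fin (2*l)) : om l x (pa l a) = if a = x then sg l x else 0 := by
  rw [om_eq]
  by_cases h : a = x
  · subst h; rw [if_pos rfl, if_pos rfl]
  · rw [if_neg h, if_neg (fun hc => h (pa_inj l hc))]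

lemma sum_collapse (x : Fin (2*l)) (f : Fin (2*l) → ℝ) :
    ∑ a, (if a = x then f a else 0) = f x := by
  simp [Finset.sum_ite_eq']

lemma sumA (x : Fin (2*l)) (f : Fin (2*l) → ℝ) :
    ∑ a, om l a x * f a = -(sg l x * f (pa l x)) := by
  simp only [om_left, ite_mul, zero_mul, sum_collapse]; ring

lemma sumB (x : Fin (2*l)) (f : Fin (2*l) → ℝ) :
    ∑ a, om l x a * f a = sg l x * f (pa l x) := by
  simp only [om_eq, ite_mul, zero_mul, sum_collapse]

lemma sumC (x : Fin (2*l)) (f : Fin (2*l) → ℝ) :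
    ∑ a, om l (pa l a) x * f a = -(sg l x * f x) := by
  simp only [om_paleft, ite_mul, zero_mul, sum_collapse]; ring

lemma sumD (x : Fin (2*l)) (f : Fin (2*l) → ℝ) :
    ∑ a, om l x (pa l a) * f a = sg l x * f x := by
  simp only [om_paright, ite_mul, zero_mul, sum_collapse]







variable (l : ℕ)

lemma omUp_eq (i j : Fin (2*l)) : omUp l i j = if j = pa l i then sg l i else 0 :=
  om_eq l i j

lemma omUp_eq_om (i j : Fin (2*l)) : omUp l i j = om l i j := rfl

section R
variable {l : ℕ} (R : Fin (2*l) → Fin (2*l) → Fin (2*l) → Fin (2*l) → ℝ)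

lemma ric_eq (i j : Fin (2*l)) : ric l R i j = ∑ k, sg l k * R (pa l k) j k i := by
  unfold ric
  refine Finset.sum_congr rfl fun k _ => ?_
  exact sumB l k (fun m => R m j k i)

variable
  (h1 : ∀ i j k m, R i j k m = - R i j m k)
  (h2 : ∀ i j k m, R i j k m + R i k m j + R i m j k = 0)
  (h3 : ∀ i j k m, R i j k m = R j i k m)

include h3 in
lemma tr12R (c d : Fin (2*l)) : ∑ a, sg l a * R a (pa l a) c d = 0 := by
  have h : (∑ a, sg l a * R a (pa l a) c d) = -∑ a, sg l a * R a (pa l a) c d := by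
    conv_lhs => rw [← sum_pa l (fun a => sg l a * R a (pa l a) c d)]
    rw [← Finset.sum_neg_distrib]
    refine Finset.sum_congr rfl fun a _ => ?_
    simp only [sg_pa, pa_pa]
    rw [h3]
    ring
  linarith

lemma tr13R (b d : Fin (2*l)) : ∑ a, sg l a * R a b (pa l a) d = - ric l R d b := by
  rw [ric_eq]
  rw [← sum_pa l (fun k => sg l k * R (pa l k) b k d)]
  rw [← Finset.sum_neg_distrib]
  refine Finset.sum_congr rfl fun a _ => ?_
  simp only [sg_pa, pa_pa]
  ring

include h1 h3 in
lemma tr14R (b c : Fin (2*l)) : ∑ a, sg l a * R a b c (pa l a) = ric l R c b := by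
  have : ∀ a, sg l a * R a b c (pa l a) = -(sg l a * R a b (pa l a) c) := by
    intro a; rw [h1]; ring
  simp only [this]
  rw [Finset.sum_neg_distrib, tr13R R, neg_neg]

include h3 in
lemma tr23R (a d : Fin (2*l)) : ∑ b, sg l b * R a b (pa l b) d = - ric l R d a := by
  have : ∀ b, sg l b * R a b (pa l b) d = sg l b * R b a (pa l b) d := by
    intro b; rw [h3 a b]
  simp only [this]
  exact tr13R R a d

include h1 h3 in
lemma tr24R (a c : Fin (2*l)) : ∑ b, sg l b * R a b c (pa l b) = ric l R c a := by
  have : ∀ b, sg l b * R a b c (pa l b) = sg l b * R b a c (pa l b) := by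
    intro b; rw [h3 a b]
  simp only [this]
  exact tr14R R h1 h3 a c

include h1 h2 h3 in
lemma tr34R (i j : Fin (2*l)) : ∑ k, sg l k * R i j k (pa l k) = 2 * ric l R j i := by
  have key : ∀ k, sg l k * R i j k (pa l k) =
      -(sg l k * R i k (pa l k) j) - sg l k * R i (pa l k) j k := by
    intro k
    have h := h2 i j k (pa l k)
    linear_combination (sg l k) * h
  simp only [key]
  rw [Finset.sum_sub_distrib, Finset.sum_neg_distrib]
  have e1 : ∑ k, sg l k * R i k (pa l k) j = - ric l R j i := tr23R R h3 i j
  have e2 : ∑ k, sg l k * R i (pa l k) j k = - ric l R j i := by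
    rw [← sum_pa l (fun k => sg l k * R i (pa l k) j k)]
    have : ∀ k, sg l (pa l k) * R i (pa l (pa l k)) j (pa l k)
        = sg l k * R i k (pa l k) j := by
      intro k
      simp only [sg_pa, pa_pa]
      rw [h1 i k j (pa l k)]
      ring
    simp only [this]
    exact tr23R R h3 i j
  rw [e1, e2]; ring

include h1 h2 h3 in
lemma ric_symm (i j : Fin (2*l)) : ric l R i j = ric l R j i := by
  have e1 := tr34R R h1 h2 h3 i j
  have e2 := tr34R R h1 h2 h3 j i
  have e3 : ∑ k, sg l k * R i j k (pa l k) = ∑ k, sg l k * R j i k (pa l k) := by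
    refine Finset.sum_congr rfl fun k _ => ?_
    rw [h3]
  rw [e3, e2] at e1
  linarith

end R

lemma sg_cases (l : ℕ) (x : Fin (2*l)) : sg l x = 1 ∨ sg l x = -1 := by
  unfold sg; split
  · exact Or.inl rfl
  · exact Or.inr rfl

section ST
variable {l : ℕ} (σ : Fin (2*l) → Fin (2*l) → ℝ) (hs : ∀ i j, σ i j = σ j i)

include hs in
lemma sum_sg_symm : ∑ a, sg l a * σ a (pa l a) = 0 := by
  have h : (∑ a, sg l a * σ a (pa l a)) = -∑ a, sg l a * σ a (pa l a) := by
    conv_lhs => rw [← sum_pa l (fun a => sg l a * σ a (pa l a))]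
    rw [← Finset.sum_neg_distrib]
    refine Finset.sum_congr rfl fun a _ => ?_
    simp only [sg_pa, pa_pa]
    rw [hs]
    ring
  linarith

include hs in
lemma st_symm (i j k m : Fin (2*l)) : st l σ i j k m = st l σ j i k m := by
  unfold st; rw [hs i j]; ring

include hs in
lemma tr12st (c d : Fin (2*l)) : ∑ a, sg l a * st l σ a (pa l a) c d = 0 := by
  set c0 : ℝ := 1/(2*((l : ℝ)+1)) with hc0
  have e : ∀ a, sg l a * st l σ a (pa l a) c d =
      c0 * (om l a d * (sg l a * σ (pa l a) c))
      - c0 * (om l a c * (sg l a * σ (pa l a) d))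
      + c0 * (om l (pa l a) d * (sg l a * σ a c))
      - c0 * (om l (pa l a) c * (sg l a * σ a d))
      + (2 * c0 * om l c d) * (sg l a * σ a (pa l a)) := by
    intro a; unfold st; rw [hc0]; ring
  simp only [e]
  rw [Finset.sum_add_distrib, Finset.sum_sub_distrib, Finset.sum_add_distrib,
    Finset.sum_sub_distrib]
  simp only [← Finset.mul_sum]
  rw [sumA l d (fun a => sg l a * σ (pa l a) c),
      sumA l c (fun a => sg l a * σ (pa l a) d),
      sumC l d (fun a => sg l a * σ a c),
      sumC l c (fun a => sg l a * σ a d),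
      sum_sg_symm σ hs]
  simp only [sg_pa, pa_pa]
  rcases sg_cases l c with h1 | h1 <;> rcases sg_cases l d with h2 | h2 <;>
    rw [h1, h2] <;> ring

include hs in
lemma tr34st (i j : Fin (2*l)) : ∑ k, sg l k * st l σ i j k (pa l k) = 2 * σ i j := by
  set c0 : ℝ := 1/(2*((l : ℝ)+1)) with hc0
  have e : ∀ k, sg l k * st l σ i j k (pa l k) =
      c0 * (om l i (pa l k) * (sg l k * σ j k))
      - c0 * (om l i k * (sg l k * σ j (pa l k)))
      + c0 * (om l j (pa l k) * (sg l k * σ i k))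
      - c0 * (om l j k * (sg l k * σ i (pa l k)))
      + (2 * c0 * σ i j) * (om l k (pa l k) * sg l k) := by
    intro k; unfold st; rw [hc0]; ring
  simp only [e, om_pa_self]
  rw [Finset.sum_add_distrib, Finset.sum_sub_distrib, Finset.sum_add_distrib,
    Finset.sum_sub_distrib]
  simp only [← Finset.mul_sum]
  rw [sumD l i (fun k => sg l k * σ j k),
      sumB l i (fun k => sg l k * σ j (pa l k)),
      sumD l j (fun k => sg l k * σ i k),
      sumB l j (fun k => sg l k * σ i (pa l k)),
      sum_sg_sq]
  simp only [sg_pa, pa_pa]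
  rw [hs j i]
  have hx : (2*((l:ℝ)+1)) ≠ 0 := by positivity
  rcases sg_cases l i with h1 | h1 <;> rcases sg_cases l j with h2 | h2 <;>
    rw [h1, h2] <;> rw [hc0] <;> field_simp <;> ring

include hs in
lemma tr13st (b d : Fin (2*l)) : ∑ a, sg l a * st l σ a b (pa l a) d = - σ d b := by
  set c0 : ℝ := 1/(2*((l : ℝ)+1)) with hc0
  have e : ∀ a, sg l a * st l σ a b (pa l a) d =
      c0 * (om l a d * (sg l a * σ b (pa l a)))
      - (c0 * σ b d) * (om l a (pa l a) * sg l a)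
      + (c0 * om l b d) * (sg l a * σ a (pa l a))
      - c0 * (om l b (pa l a) * (sg l a * σ a d))
      + (2 * c0) * (om l (pa l a) d * (sg l a * σ a b)) := by
    intro a; unfold st; rw [hc0]; ring
  simp only [e, om_pa_self]
  rw [Finset.sum_add_distrib, Finset.sum_sub_distrib, Finset.sum_add_distrib,
    Finset.sum_sub_distrib]
  simp only [← Finset.mul_sum]
  rw [sumA l d (fun a => sg l a * σ b (pa l a)),
      sumD l b (fun a => sg l a * σ a d),
      sumC l d (fun a => sg l a * σ a b),
      sum_sg_symm σ hs, sum_sg_sq]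
  simp only [sg_pa, pa_pa]
  rw [hs b d]
  have hx : (2*((l:ℝ)+1)) ≠ 0 := by positivity
  rcases sg_cases l b with h1 | h1 <;> rcases sg_cases l d with h2 | h2 <;>
    rw [h1, h2] <;> rw [hc0] <;> field_simp <;> ring

include hs in
lemma tr14st (b c : Fin (2*l)) : ∑ a, sg l a * st l σ a b c (pa l a) = σ c b := by
  set c0 : ℝ := 1/(2*((l : ℝ)+1)) with hc0
  have e : ∀ a, sg l a * st l σ a b c (pa l a) =
      (c0 * σ b c) * (om l a (pa l a) * sg l a)
      - c0 * (om l a c * (sg l a * σ b (pa l a)))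
      + c0 * (om l b (pa l a) * (sg l a * σ a c))
      - (c0 * om l b c) * (sg l a * σ a (pa l a))
      + (2 * c0) * (om l c (pa l a) * (sg l a * σ a b)) := by
    intro a; unfold st; rw [hc0]; ring
  simp only [e, om_pa_self]
  rw [Finset.sum_add_distrib, Finset.sum_sub_distrib, Finset.sum_add_distrib,
    Finset.sum_sub_distrib]
  simp only [← Finset.mul_sum]
  rw [sumA l c (fun a => sg l a * σ b (pa l a)),
      sumD l b (fun a => sg l a * σ a c),
      sumD l c (fun a => sg l a * σ a b),
      sum_sg_symm σ hs, sum_sg_sq]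
  simp only [sg_pa, pa_pa]
  rw [hs b c, hs c b]
  have hx : (2*((l:ℝ)+1)) ≠ 0 := by positivity
  rcases sg_cases l b with h1 | h1 <;> rcases sg_cases l c with h2 | h2 <;>
    rw [h1, h2] <;> rw [hc0] <;> field_simp <;> ring

include hs in
lemma tr23st (a d : Fin (2*l)) : ∑ b, sg l b * st l σ a b (pa l b) d = - σ d a := by
  have e : ∀ b : Fin (2*l), sg l b * st l σ a b (pa l b) d
      = sg l b * st l σ b a (pa l b) d := by
    intro b; rw [st_symm σ hs a b]
  simp only [e]
  exact tr13st σ hs a d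

include hs in
lemma tr24st (a c : Fin (2*l)) : ∑ b, sg l b * st l σ a b c (pa l b) = σ c a := by
  have e : ∀ b : Fin (2*l), sg l b * st l σ a b c (pa l b)
      = sg l b * st l σ b a c (pa l b) := by
    intro b; rw [st_symm σ hs a b]
  simp only [e]
  exact tr14st σ hs a c

end ST

section W
variable {l : ℕ} (R : Fin (2*l) → Fin (2*l) → Fin (2*l) → Fin (2*l) → ℝ)
  (h1 : ∀ i j k m, R i j k m = - R i j m k)
  (h2 : ∀ i j k m, R i j k m + R i k m j + R i m j k = 0)
  (h3 : ∀ i j k m, R i j k m = R j i k m)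

include h1 h2 h3

lemma weyl_split (i j k m : Fin (2*l)) (s : ℝ) :
    s * weyl l R i j k m = s * R i j k m - s * st l (ric l R) i j k m := by
  unfold weyl; ring

lemma trW12 (c d : Fin (2*l)) : ∑ a, sg l a * weyl l R a (pa l a) c d = 0 := by
  simp only [weyl_split R h1 h2 h3]
  rw [Finset.sum_sub_distrib, tr12R R h3, tr12st _ (ric_symm R h1 h2 h3)]
  ring

lemma trW13 (b d : Fin (2*l)) : ∑ a, sg l a * weyl l R a b (pa l a) d = 0 := by
  simp only [weyl_split R h1 h2 h3]
  rw [Finset.sum_sub_distrib, tr13R R, tr13st _ (ric_symm R h1 h2 h3)]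
  ring

lemma trW14 (b c : Fin (2*l)) : ∑ a, sg l a * weyl l R a b c (pa l a) = 0 := by
  simp only [weyl_split R h1 h2 h3]
  rw [Finset.sum_sub_distrib, tr14R R h1 h3, tr14st _ (ric_symm R h1 h2 h3)]
  ring

lemma trW23 (a d : Fin (2*l)) : ∑ b, sg l b * weyl l R a b (pa l b) d = 0 := by
  simp only [weyl_split R h1 h2 h3]
  rw [Finset.sum_sub_distrib, tr23R R h3, tr23st _ (ric_symm R h1 h2 h3)]
  ring

lemma trW24 (a c : Fin (2*l)) : ∑ b, sg l b * weyl l R a b c (pa l b) = 0 := by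
  simp only [weyl_split R h1 h2 h3]
  rw [Finset.sum_sub_distrib, tr24R R h1 h3, tr24st _ (ric_symm R h1 h2 h3)]
  ring

lemma trW34 (i j : Fin (2*l)) : ∑ k, sg l k * weyl l R i j k (pa l k) = 0 := by
  simp only [weyl_split R h1 h2 h3]
  rw [Finset.sum_sub_distrib, tr34R R h1 h2 h3, tr34st _ (ric_symm R h1 h2 h3),
    ric_symm R h1 h2 h3 i j]
  ring

end W

lemma upT_eq {l : ℕ} (T : Fin (2*l) → Fin (2*l) → Fin (2*l) → Fin (2*l) → ℝ)
    (i j k m : Fin (2*l)) :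
    upT l T i j k m =
      sg l i * (sg l j * (sg l k * (sg l m *
        T (pa l i) (pa l j) (pa l k) (pa l m)))) := by
  unfold upT
  have e : ∀ a b c d, omUp l i a * omUp l j b * omUp l k c * omUp l m d * T a b c d
      = om l i a * (om l j b * (om l k c * (om l m d * T a b c d))) := by
    intro a b c d
    simp only [omUp_eq_om]
    ring
  simp only [e]
  simp only [← Finset.mul_sum]
  rw [sumB l i (fun a => ∑ b, om l j b * (∑ c, om l k c * (∑ d, om l m d * T a b c d)))]
  rw [sumB l j (fun b => ∑ c, om l k c * (∑ d, om l m d * T (pa l i) b c d))]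
  rw [sumB l k (fun c => ∑ d, om l m d * T (pa l i) (pa l j) c d)]
  rw [sumB l m (fun d => T (pa l i) (pa l j) (pa l k) d)]


theorem stmt_5_aux (l : ℕ) (hl : 2 ≤ l) (R : Fin (2*l) → Fin (2*l) → Fin (2*l) → Fin (2*l) → ℝ)
    (h1 : ∀ i j k m, R i j k m = - R i j m k)
    (h2 : ∀ i j k m, R i j k m + R i k m j + R i m j k = 0)
    (h3 : ∀ i j k m, R i j k m = R j i k m) :
    (∀ k m, ∑ i, ∑ j, upT l (weyl l R) i j k m * om l i j = 0) ∧
    (∀ j m, ∑ i, ∑ k, upT l (weyl l R) i j k m * om l i k = 0) ∧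
    (∀ j k, ∑ i, ∑ m, upT l (weyl l R) i j k m * om l i m = 0) ∧
    (∀ i m, ∑ j, ∑ k, upT l (weyl l R) i j k m * om l j k = 0) ∧
    (∀ i k, ∑ j, ∑ m, upT l (weyl l R) i j k m * om l j m = 0) ∧
    (∀ i j, ∑ k, ∑ m, upT l (weyl l R) i j k m * om l k m = 0) := by
  set W := weyl l R with hW
  refine ⟨?_, ?_, ?_, ?_, ?_, ?_⟩
  · -- trace (1,2)
    intro k m
    simp only [upT_eq, om_eq, mul_ite, mul_zero, sum_collapse, pa_pa]
    have e2 : ∀ i, (sg l i * (sg l (pa l i) * (sg l k * (sg l m *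
        W (pa l i) i (pa l k) (pa l m))))) * sg l i
        = -(sg l k * sg l m * (sg l i * W (pa l i) i (pa l k) (pa l m))) := by
      intro i
      rw [sg_pa]
      rcases sg_cases l i with h | h <;> rw [h] <;> ring
    simp only [e2]
    rw [Finset.sum_neg_distrib, ← Finset.mul_sum,
      ← sum_pa l (fun i => sg l i * W (pa l i) i (pa l k) (pa l m))]
    have e3 : ∀ i, sg l (pa l i) * W (pa l (pa l i)) (pa l i) (pa l k) (pa l m)
        = -(sg l i * W i (pa l i) (pa l k) (pa l m)) := by
      intro i; rw [sg_pa, pa_pa]; ring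
    simp only [e3]
    rw [Finset.sum_neg_distrib, trW12 R h1 h2 h3]
    ring
  · -- trace (1,3)
    intro j m
    simp only [upT_eq, om_eq, mul_ite, mul_zero, sum_collapse, pa_pa]
    have e2 : ∀ i, (sg l i * (sg l j * (sg l (pa l i) * (sg l m *
        W (pa l i) (pa l j) i (pa l m))))) * sg l i
        = -(sg l j * sg l m * (sg l i * W (pa l i) (pa l j) i (pa l m))) := by
      intro i
      rw [sg_pa]
      rcases sg_cases l i with h | h <;> rw [h] <;> ring
    simp only [e2]
    rw [Finset.sum_neg_distrib, ← Finset.mul_sum,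
      ← sum_pa l (fun i => sg l i * W (pa l i) (pa l j) i (pa l m))]
    have e3 : ∀ i, sg l (pa l i) * W (pa l (pa l i)) (pa l j) (pa l i) (pa l m)
        = -(sg l i * W i (pa l j) (pa l i) (pa l m)) := by
      intro i; rw [sg_pa, pa_pa]; ring
    simp only [e3]
    rw [Finset.sum_neg_distrib, trW13 R h1 h2 h3]
    ring
  · -- trace (1,4)
    intro j k
    simp only [upT_eq, om_eq, mul_ite, mul_zero, sum_collapse, pa_pa]
    have e2 : ∀ i, (sg l i * (sg l j * (sg l k * (sg l (pa l i) *
        W (pa l i) (pa l j) (pa l k) i)))) * sg l i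
        = -(sg l j * sg l k * (sg l i * W (pa l i) (pa l j) (pa l k) i)) := by
      intro i
      rw [sg_pa]
      rcases sg_cases l i with h | h <;> rw [h] <;> ring
    simp only [e2]
    rw [Finset.sum_neg_distrib, ← Finset.mul_sum,
      ← sum_pa l (fun i => sg l i * W (pa l i) (pa l j) (pa l k) i)]
    have e3 : ∀ i, sg l (pa l i) * W (pa l (pa l i)) (pa l j) (pa l k) (pa l i)
        = -(sg l i * W i (pa l j) (pa l k) (pa l i)) := by
      intro i; rw [sg_pa, pa_pa]; ring
    simp only [e3]
    rw [Finset.sum_neg_distrib, trW14 R h1 h2 h3]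
    ring
  · -- trace (2,3)
    intro i m
    simp only [upT_eq, om_eq, mul_ite, mul_zero, sum_collapse, pa_pa]
    have e2 : ∀ j, (sg l i * (sg l j * (sg l (pa l j) * (sg l m *
        W (pa l i) (pa l j) j (pa l m))))) * sg l j
        = -(sg l i * sg l m * (sg l j * W (pa l i) (pa l j) j (pa l m))) := by
      intro j
      rw [sg_pa]
      rcases sg_cases l j with h | h <;> rw [h] <;> ring
    simp only [e2]
    rw [Finset.sum_neg_distrib, ← Finset.mul_sum,
      ← sum_pa l (fun j => sg l j * W (pa l i) (pa l j) j (pa l m))]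
    have e3 : ∀ j, sg l (pa l j) * W (pa l i) (pa l (pa l j)) (pa l j) (pa l m)
        = -(sg l j * W (pa l i) j (pa l j) (pa l m)) := by
      intro j; rw [sg_pa, pa_pa]; ring
    simp only [e3]
    rw [Finset.sum_neg_distrib, trW23 R h1 h2 h3]
    ring
  · -- trace (2,4)
    intro i k
    simp only [upT_eq, om_eq, mul_ite, mul_zero, sum_collapse, pa_pa]
    have e2 : ∀ j, (sg l i * (sg l j * (sg l k * (sg l (pa l j) *
        W (pa l i) (pa l j) (pa l k) j)))) * sg l j
        = -(sg l i * sg l k * (sg l j * W (pa l i) (pa l j) (pa l k) j)) := by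
      intro j
      rw [sg_pa]
      rcases sg_cases l j with h | h <;> rw [h] <;> ring
    simp only [e2]
    rw [Finset.sum_neg_distrib, ← Finset.mul_sum,
      ← sum_pa l (fun j => sg l j * W (pa l i) (pa l j) (pa l k) j)]
    have e3 : ∀ j, sg l (pa l j) * W (pa l i) (pa l (pa l j)) (pa l k) (pa l j)
        = -(sg l j * W (pa l i) j (pa l k) (pa l j)) := by
      intro j; rw [sg_pa, pa_pa]; ring
    simp only [e3]
    rw [Finset.sum_neg_distrib, trW24 R h1 h2 h3]
    ring
  · -- trace (3,4)
    intro i j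
    simp only [upT_eq, om_eq, mul_ite, mul_zero, sum_collapse, pa_pa]
    have e2 : ∀ k, (sg l i * (sg l j * (sg l k * (sg l (pa l k) *
        W (pa l i) (pa l j) (pa l k) k)))) * sg l k
        = -(sg l i * sg l j * (sg l k * W (pa l i) (pa l j) (pa l k) k)) := by
      intro k
      rw [sg_pa]
      rcases sg_cases l k with h | h <;> rw [h] <;> ring
    simp only [e2]
    rw [Finset.sum_neg_distrib, ← Finset.mul_sum,
      ← sum_pa l (fun k => sg l k * W (pa l i) (pa l j) (pa l k) k)]
    have e3 : ∀ k, sg l (pa l k) * W (pa l i) (pa l j) (pa l (pa l k)) (pa l k)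
        = -(sg l k * W (pa l i) (pa l j) k (pa l k)) := by
      intro k; rw [sg_pa, pa_pa]; ring
    simp only [e3]
    rw [Finset.sum_neg_distrib, trW34 R h1 h2 h3]
    ring


end S5

/-- the symplectic Weyl tensor is totally trace-free. -/
theorem stmt_5 (l : ℕ) (hl : 2 ≤ l) (R : Fin (2*l) → Fin (2*l) → Fin (2*l) → Fin (2*l) → ℝ)
    (h1 : ∀ i j k m, R i j k m = - R i j m k)
    (h2 : ∀ i j k m, R i j k m + R i k m j + R i m j k = 0)
    (h3 : ∀ i j k m, R i j k m = R j i k m) :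
    (∀ k m, ∑ i, ∑ j, upT l (weyl l R) i j k m * om l i j = 0) ∧
    (∀ j m, ∑ i, ∑ k, upT l (weyl l R) i j k m * om l i k = 0) ∧
    (∀ j k, ∑ i, ∑ m, upT l (weyl l R) i j k m * om l i m = 0) ∧
    (∀ i m, ∑ j, ∑ k, upT l (weyl l R) i j k m * om l j k = 0) ∧
    (∀ i k, ∑ j, ∑ m, upT l (weyl l R) i j k m * om l j m = 0) ∧
    (∀ i j, ∑ k, ∑ m, upT l (weyl l R) i j k m * om l k m = 0) :=
  S5.stmt_5_aux l hl R h1 h2 h3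

end
end

section
/- The symplectic Weyl curvature tensor satisfies the extended first Bianchi identity: W_{ijkl} + W_{lijk} + W_{klij} + W_{jkli} = 0 for all i, j, k, l. -/
noncomputable section

open Finset MvPolynomial

lemma om_anti (l : ℕ) (hl : 1 ≤ l) (a b : Fin (2*l)) : om l a b = - om l b a := by
  unfold om
  split_ifs <;> first | (exfalso; omega) | norm_num

lemma omUp_anti (l : ℕ) (hl : 1 ≤ l) (a b : Fin (2*l)) : omUp l a b = - omUp l b a := by
  unfold omUp
  split_ifs <;> first | (exfalso; omega) | norm_num

lemma sum_sum_antisymm {n : ℕ} (A : Fin n → Fin n → ℝ) (h : ∀ k m, A k m = - A m k) :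
    (∑ k, ∑ m, A k m) = 0 := by
  have h1 : (∑ k, ∑ m, A k m) = ∑ k, ∑ m, -(A m k) :=
    Finset.sum_congr rfl fun k _ => Finset.sum_congr rfl fun m _ => h k m
  have h2 : (∑ k, ∑ m, -(A m k)) = -(∑ k, ∑ m, A m k) := by
    simp
  have h3 : (∑ k, ∑ m, A m k) = ∑ m, ∑ k, A m k := Finset.sum_comm
  linarith [h1, h2, h3]

lemma ric_symm (l : ℕ) (hl : 1 ≤ l) (R : Fin (2*l) → Fin (2*l) → Fin (2*l) → Fin (2*l) → ℝ)
    (h1 : ∀ i j k m, R i j k m = - R i j m k)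
    (h2 : ∀ i j k m, R i j k m + R i k m j + R i m j k = 0)
    (h3 : ∀ i j k m, R i j k m = R j i k m)
    (i j : Fin (2*l)) : ric l R i j = ric l R j i := by
  unfold ric
  have key : ∀ k m : Fin (2*l), omUp l k m * R m j k i
      = omUp l k m * (- R m k i j) + omUp l k m * R m i k j := by
    intro k m
    have e := h2 m j k i
    have e1 := h1 m i j k
    have : R m j k i = - R m k i j + R m i k j := by linarith
    rw [this]; ring
  have hsplit : (∑ k, ∑ m, omUp l k m * R m j k i)
      = (∑ k, ∑ m, omUp l k m * (- R m k i j)) + ∑ k, ∑ m, omUp l k m * R m i k j := by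
    rw [← Finset.sum_add_distrib]
    refine Finset.sum_congr rfl fun k _ => ?_
    rw [← Finset.sum_add_distrib]
    exact Finset.sum_congr rfl fun m _ => key k m
  have hzero : (∑ k, ∑ m, omUp l k m * (- R m k i j)) = 0 := by
    apply sum_sum_antisymm
    intro k m
    rw [omUp_anti l hl k m, h3 m k i j]
    ring
  rw [hsplit, hzero, zero_add]

/-- extended first Bianchi identity for the symplectic Weyl tensor. -/
theorem stmt_6 (l : ℕ) (hl : 2 ≤ l) (R : Fin (2*l) → Fin (2*l) → Fin (2*l) → Fin (2*l) → ℝ)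
    (h1 : ∀ i j k m, R i j k m = - R i j m k)
    (h2 : ∀ i j k m, R i j k m + R i k m j + R i m j k = 0)
    (h3 : ∀ i j k m, R i j k m = R j i k m)
    (i j k m : Fin (2*l)) :
    weyl l R i j k m + weyl l R m i j k + weyl l R k m i j + weyl l R j k m i = 0 := by
  have hl1 : 1 ≤ l := by omega
  have hA : R i j k m + R m i j k + R k m i j + R j k m i = 0 := by
    linarith [h2 i j k m, h2 m i j k, h2 k m i j, h2 j k m i,
      h3 j i k m, h3 i m j k, h3 m k i j, h3 k j m i,
      h3 k i j m, h1 i k m j, h3 m j k i, h1 j m i k]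
  have hσ := ric_symm l hl1 R h1 h2 h3
  have hω := om_anti l hl1
  have hB : st l (ric l R) i j k m + st l (ric l R) m i j k
      + st l (ric l R) k m i j + st l (ric l R) j k m i = 0 := by
    unfold st
    rw [hω j i, hω k i, hω m i, hω k j, hω m j, hω m k,
      hσ j i, hσ k i, hσ m i, hσ k j, hσ m j, hσ m k]
    ring
  unfold weyl
  linarith [hA, hB]

end
end
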